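/- (Zero padding T2.) Let k ≥ 2, m, n ∈ 2ℕ, let r_1,…,r_n, c_1,…,c_m ∈ ℕ₀, and for each (i,j) ∈ C(m,n,2) let ∼_{i,j} ∈ {≤, ≥, =} be a relation and v(i,j) ∈ ℕ₀. Set m' := mk/2 and n' := nk/2, and define r'_1,…,r'_{n'} by r'_{(k/2)(j−1)+1} := r_j and r'_{(k/2)(j−1)+2} := r_{j+1} for each odd j ∈ [n], and r'_s := 0 for all remaining indices s ∈ [n']; define c'_1,…,c'_{m'} analogously from c. Then there exists a binary matrix ξ on [m]×[n] with row sums r, column sums c, and Σ_{(p,q)∈B_2(i,j)} ξ_{p,q} ∼_{i,j} v(i,j) for all (i,j) ∈ C(m,n,2), if and only if there exists a binary matrix ξ' on [m']×[n'] with row sums r', column sums c', and Σ_{(p,q)∈B_k(i',j')} ξ'_{p,q} ∼_{i,j} v(i,j) for all (i,j) ∈ C(m,n,2), where (i',j') := ((k/2)(i−1)+1, (k/2)(j−1)+1); the map (i,j) ↦ (i',j') is a bijection from C(m,n,2) onto C(m',n',k). -/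

import Mathlib

open scoped Classical

/-- The grid `[m] × [n] = {1,…,m} × {1,…,n}`. -/
def gridIcc (m n : ℕ) : Finset (ℕ × ℕ) := Finset.Icc 1 m ×ˢ Finset.Icc 1 n

/-- The corner points `C(m,n,k) = ([m] × [n]) ∩ (kℕ₀+1)²`. -/
def cornerPts (m n k : ℕ) : Finset (ℕ × ℕ) :=
  (gridIcc m n).filter fun p => p.1 % k = 1 % k ∧ p.2 % k = 1 % k

/-- The block `B_k(i,j) = {(i+a, j+b) : a, b ∈ [k-1]₀}`. -/
def blockF (k i j : ℕ) : Finset (ℕ × ℕ) :=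
  Finset.Icc i (i + k - 1) ×ˢ Finset.Icc j (j + k - 1)

/-- A comparison relation `∼ ∈ {≤, ≥, =}`. -/
inductive CmpRel : Type
  | le : CmpRel
  | ge : CmpRel
  | eq : CmpRel

/-- The relation `a ∼ b`. -/
def CmpRel.holds : CmpRel → ℕ → ℕ → Prop
  | .le, a, b => a ≤ b
  | .ge, a, b => a ≥ b
  | .eq, a, b => a = b

/-- Zero-padded measurements (T2): the index `s = (k/2)(j−1) + 1 + l` with `j` odd and
`l ∈ [k-1]₀` gets the value `r j` if `l = 0`, `r (j+1)` if `l = 1`, and `0` otherwise. -/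
def pad0 (k : ℕ) (r : ℕ → ℕ) (s : ℕ) : ℕ :=
  if (s - 1) % k = 0 then r (2 * ((s - 1) / k) + 1)
  else if (s - 1) % k = 1 then r (2 * ((s - 1) / k) + 2)
  else 0

/-- The corner map `(i,j) ↦ (i',j') = ((k/2)(i−1)+1, (k/2)(j−1)+1)`. -/
def cornerMap (k : ℕ) (w : ℕ × ℕ) : ℕ × ℕ :=
  (k * (w.1 - 1) / 2 + 1, k * (w.2 - 1) / 2 + 1)


namespace Stmt7Aux

/-- old index `p` ↦ new index. -/
def padIdx (k p : ℕ) : ℕ := k * ((p - 1) / 2) + (p - 1) % 2 + 1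

/-- new index `s` ↦ old index. -/
def unpadIdx (k s : ℕ) : ℕ := 2 * ((s - 1) / k) + (s - 1) % k + 1

lemma mod_offset {k : ℕ} (hk : 0 < k) (u a : ℕ) (ha : a < k) : (k * u + a) % k = a := by
  rw [Nat.mul_add_mod, Nat.mod_eq_of_lt ha]

lemma pad_mod {k : ℕ} (hk : 2 ≤ k) (p : ℕ) : (padIdx k p - 1) % k = (p - 1) % 2 := by
  have h : padIdx k p - 1 = k * ((p - 1) / 2) + (p - 1) % 2 := by simp [padIdx]
  rw [h, mod_offset (by omega) _ _ (by omega)]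

lemma pad_div {k : ℕ} (hk : 2 ≤ k) (p : ℕ) : (padIdx k p - 1) / k = (p - 1) / 2 := by
  have h : padIdx k p - 1 = k * ((p - 1) / 2) + (p - 1) % 2 := by simp [padIdx]
  rw [h, Nat.mul_add_div (by omega), Nat.div_eq_of_lt (show (p - 1) % 2 < k by omega)]
  omega

lemma unpad_pad {k : ℕ} (hk : 2 ≤ k) {p : ℕ} (hp : 1 ≤ p) : unpadIdx k (padIdx k p) = p := by
  unfold unpadIdx
  rw [pad_mod hk, pad_div hk]
  omega

lemma pad_unpad {k : ℕ} (hk : 2 ≤ k) {s : ℕ} (hs : 1 ≤ s) (h : (s - 1) % k ≤ 1) :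
    padIdx k (unpadIdx k s) = s := by
  have h1 : unpadIdx k s - 1 = 2 * ((s - 1) / k) + (s - 1) % k := by simp [unpadIdx]
  unfold padIdx
  rw [h1]
  have h2 : (2 * ((s - 1) / k) + (s - 1) % k) / 2 = (s - 1) / k := by omega
  have h3 : (2 * ((s - 1) / k) + (s - 1) % k) % 2 = (s - 1) % k := by omega
  rw [h2, h3]
  have := Nat.div_add_mod (s - 1) k
  omega

lemma pad_mem {k : ℕ} (hk : 2 ≤ k) {m₂ p : ℕ} (hp : p ∈ Finset.Icc 1 (2 * m₂)) :
    padIdx k p ∈ Finset.Icc 1 (m₂ * k) := by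
  simp only [Finset.mem_Icc] at hp ⊢
  obtain ⟨t, rfl⟩ : ∃ t, m₂ = t + 1 := ⟨m₂ - 1, by omega⟩
  have hu : (p - 1) / 2 ≤ t := by omega
  have h2 : k * ((p - 1) / 2) ≤ k * t := Nat.mul_le_mul_left k hu
  have h3 : padIdx k p = k * ((p - 1) / 2) + (p - 1) % 2 + 1 := rfl
  have h4 : (t + 1) * k = k * t + k := by ring
  omega

lemma unpad_mem {k : ℕ} (hk : 2 ≤ k) {m₂ s : ℕ} (hs : s ∈ Finset.Icc 1 (m₂ * k))
    (h : (s - 1) % k ≤ 1) : unpadIdx k s ∈ Finset.Icc 1 (2 * m₂) := by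
  simp only [Finset.mem_Icc] at hs ⊢
  have hmul : m₂ * k = k * m₂ := by ring
  have h1 : (s - 1) / k < m₂ := Nat.div_lt_of_lt_mul (by omega)
  unfold unpadIdx
  omega

lemma sum_pad {k : ℕ} (hk : 2 ≤ k) (m₂ : ℕ) (F : ℕ → ℕ) :
    ∑ s ∈ (Finset.Icc 1 (m₂ * k)).filter (fun s => (s - 1) % k ≤ 1), F s
      = ∑ p ∈ Finset.Icc 1 (2 * m₂), F (padIdx k p) := by
  refine Finset.sum_nbij' (unpadIdx k) (padIdx k) ?_ ?_ ?_ ?_ ?_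
  · intro s hs
    simp only [Finset.mem_filter] at hs
    exact unpad_mem hk hs.1 hs.2
  · intro p hp
    simp only [Finset.mem_filter]
    refine ⟨pad_mem hk hp, ?_⟩
    rw [pad_mod hk]; omega
  · intro s hs
    simp only [Finset.mem_filter, Finset.mem_Icc] at hs
    exact pad_unpad hk (by omega) hs.2
  · intro p hp
    simp only [Finset.mem_Icc] at hp
    exact unpad_pad hk (by omega)
  · intro s hs
    simp only [Finset.mem_filter, Finset.mem_Icc] at hs
    rw [pad_unpad hk (by omega) hs.2]

lemma pad0_eq {k : ℕ} (r : ℕ → ℕ) {s : ℕ} (h : (s - 1) % k ≤ 1) :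
    pad0 k r s = r (unpadIdx k s) := by
  unfold pad0 unpadIdx
  interval_cases h' : (s - 1) % k <;> simp [h']

lemma pad0_zero {k : ℕ} (r : ℕ → ℕ) {s : ℕ} (h : 2 ≤ (s - 1) % k) : pad0 k r s = 0 := by
  unfold pad0
  rw [if_neg (by omega), if_neg (by omega)]

lemma unpad_at {k : ℕ} (hk : 2 ≤ k) (u a : ℕ) (ha : a < k) :
    unpadIdx k (k * u + 1 + a) = 2 * u + a + 1 := by
  unfold unpadIdx
  have h1 : k * u + 1 + a - 1 = k * u + a := by omega
  rw [h1, mod_offset (by omega) u a ha, Nat.mul_add_div (by omega),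
    Nat.div_eq_of_lt ha]
  omega

lemma pad_at {k : ℕ} (u a : ℕ) (ha : a ≤ 1) : padIdx k (2 * u + 1 + a) = k * u + a + 1 := by
  unfold padIdx
  have h1 : 2 * u + 1 + a - 1 = 2 * u + a := by omega
  have h2 : (2 * u + a) / 2 = u := by omega
  have h3 : (2 * u + a) % 2 = a := by omega
  rw [h1, h2, h3]

lemma sum_block2 (i j : ℕ) (h : ℕ × ℕ → ℕ) :
    ∑ z ∈ Finset.Icc i (i + 1) ×ˢ Finset.Icc j (j + 1), h z
      = h (i, j) + h (i, j + 1) + h (i + 1, j) + h (i + 1, j + 1) := by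
  have hi : Finset.Icc i (i + 1) = {i, i + 1} := by ext x; simp; omega
  have hj : Finset.Icc j (j + 1) = {j, j + 1} := by ext x; simp; omega
  rw [Finset.sum_product, hi, hj,
    Finset.sum_pair (by omega : i ≠ i + 1), Finset.sum_pair (by omega : j ≠ j + 1),
    Finset.sum_pair (by omega : j ≠ j + 1)]
  ring

lemma filter_block {k : ℕ} (hk : 2 ≤ k) (u w : ℕ) :
    (blockF k (k * u + 1) (k * w + 1)).filter
        (fun z => (z.1 - 1) % k ≤ 1 ∧ (z.2 - 1) % k ≤ 1)
      = Finset.Icc (k * u + 1) (k * u + 2) ×ˢ Finset.Icc (k * w + 1) (k * w + 2) := by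
  ext z
  simp only [blockF, Finset.mem_filter, Finset.mem_product, Finset.mem_Icc]
  constructor
  · rintro ⟨⟨⟨h1, h2⟩, h3, h4⟩, h5, h6⟩
    have e1 : (z.1 - 1) % k = z.1 - (k * u + 1) := by
      have hh : z.1 - 1 = k * u + (z.1 - (k * u + 1)) := by omega
      rw [hh, mod_offset (by omega) _ _ (by omega)]
    have e2 : (z.2 - 1) % k = z.2 - (k * w + 1) := by
      have hh : z.2 - 1 = k * w + (z.2 - (k * w + 1)) := by omega
      rw [hh, mod_offset (by omega) _ _ (by omega)]
    omega
  · rintro ⟨⟨h1, h2⟩, h3, h4⟩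
    have e1 : (z.1 - 1) % k = z.1 - (k * u + 1) := by
      have hh : z.1 - 1 = k * u + (z.1 - (k * u + 1)) := by omega
      rw [hh, mod_offset (by omega) _ _ (by omega)]
    have e2 : (z.2 - 1) % k = z.2 - (k * w + 1) := by
      have hh : z.2 - 1 = k * w + (z.2 - (k * w + 1)) := by omega
      rw [hh, mod_offset (by omega) _ _ (by omega)]
    exact ⟨⟨⟨h1, by omega⟩, h3, by omega⟩, by omega, by omega⟩

lemma sum_blockF_eq {k : ℕ} (hk : 2 ≤ k) (u w : ℕ) (h : ℕ × ℕ → ℕ)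
    (hv : ∀ z ∈ blockF k (k * u + 1) (k * w + 1),
      (2 ≤ (z.1 - 1) % k ∨ 2 ≤ (z.2 - 1) % k) → h z = 0) :
    ∑ z ∈ blockF k (k * u + 1) (k * w + 1), h z
      = h (k * u + 1, k * w + 1) + h (k * u + 1, k * w + 2)
        + h (k * u + 2, k * w + 1) + h (k * u + 2, k * w + 2) := by
  rw [← Finset.sum_filter_of_ne
      (p := fun z => (z.1 - 1) % k ≤ 1 ∧ (z.2 - 1) % k ≤ 1)
      (fun z hz hne => by
        by_contra hc
        exact hne (hv z hz (by omega)))]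
  rw [filter_block hk u w]
  have := sum_block2 (k * u + 1) (k * w + 1) h
  rw [show k * u + 1 + 1 = k * u + 2 by omega, show k * w + 1 + 1 = k * w + 2 by omega] at this
  exact this

lemma cornerMap_eval (k u w : ℕ) : cornerMap k (2 * u + 1, 2 * w + 1) = (k * u + 1, k * w + 1) := by
  have h1 : ∀ a : ℕ, k * (2 * a) / 2 = k * a := by
    intro a
    rw [show k * (2 * a) = k * a * 2 by ring, Nat.mul_div_cancel _ (by omega : 0 < 2)]
  simp [cornerMap, h1]

lemma corner_mem {m₂ n₂ : ℕ} {w : ℕ × ℕ} (hw : w ∈ cornerPts (2 * m₂) (2 * n₂) 2) :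
    ∃ u v : ℕ, u < m₂ ∧ v < n₂ ∧ w = (2 * u + 1, 2 * v + 1) := by
  simp only [cornerPts, gridIcc, Finset.mem_filter, Finset.mem_product, Finset.mem_Icc] at hw
  obtain ⟨⟨⟨h1, h2⟩, h3, h4⟩, h5, h6⟩ := hw
  exact ⟨(w.1 - 1) / 2, (w.2 - 1) / 2, by omega, by omega, by
    rw [Prod.ext_iff]; constructor <;> simp <;> omega⟩


/-- The padded matrix built from an original matrix. -/
def padMat (k : ℕ) (ξ : ℕ × ℕ → ℕ) (z : ℕ × ℕ) : ℕ :=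
  if (z.1 - 1) % k ≤ 1 ∧ (z.2 - 1) % k ≤ 1 then ξ (unpadIdx k z.1, unpadIdx k z.2) else 0

lemma padMat_pos {k : ℕ} {ξ : ℕ × ℕ → ℕ} {z : ℕ × ℕ} (h1 : (z.1 - 1) % k ≤ 1)
    (h2 : (z.2 - 1) % k ≤ 1) : padMat k ξ z = ξ (unpadIdx k z.1, unpadIdx k z.2) :=
  if_pos ⟨h1, h2⟩

lemma padMat_neg {k : ℕ} {ξ : ℕ × ℕ → ℕ} {z : ℕ × ℕ}
    (h : ¬((z.1 - 1) % k ≤ 1 ∧ (z.2 - 1) % k ≤ 1)) : padMat k ξ z = 0 :=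
  if_neg h

lemma blockF_two (i j : ℕ) : blockF 2 i j = Finset.Icc i (i + 1) ×ˢ Finset.Icc j (j + 1) := by
  unfold blockF
  congr 1 <;> congr 1 <;> omega

end Stmt7Aux

open Stmt7Aux

theorem stmt7 (k m n : ℕ) (hk : 2 ≤ k)
    (hm : 2 ∣ m) (hm0 : 0 < m) (hn : 2 ∣ n) (hn0 : 0 < n)
    (r c : ℕ → ℕ) (rel : ℕ × ℕ → CmpRel) (v : ℕ × ℕ → ℕ) :
    ((∃ ξ : ℕ × ℕ → ℕ,
      (∀ p ∈ gridIcc m n, ξ p ≤ 1) ∧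
      (∀ q ∈ Finset.Icc 1 n, ∑ p ∈ Finset.Icc 1 m, ξ (p, q) = r q) ∧
      (∀ p ∈ Finset.Icc 1 m, ∑ q ∈ Finset.Icc 1 n, ξ (p, q) = c p) ∧
      (∀ w ∈ cornerPts m n 2, (rel w).holds (∑ z ∈ blockF 2 w.1 w.2, ξ z) (v w)))
    ↔ (∃ ξ' : ℕ × ℕ → ℕ,
      (∀ p ∈ gridIcc (m * k / 2) (n * k / 2), ξ' p ≤ 1) ∧
      (∀ q ∈ Finset.Icc 1 (n * k / 2),
        ∑ p ∈ Finset.Icc 1 (m * k / 2), ξ' (p, q) = pad0 k r q) ∧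
      (∀ p ∈ Finset.Icc 1 (m * k / 2),
        ∑ q ∈ Finset.Icc 1 (n * k / 2), ξ' (p, q) = pad0 k c p) ∧
      (∀ w ∈ cornerPts m n 2, (rel w).holds
        (∑ z ∈ blockF k (cornerMap k w).1 (cornerMap k w).2, ξ' z) (v w))))
    ∧ (cornerPts m n 2).image (cornerMap k) = cornerPts (m * k / 2) (n * k / 2) k
    ∧ Set.InjOn (cornerMap k) ↑(cornerPts m n 2) := by
  obtain ⟨m₂, rfl⟩ := hm
  obtain ⟨n₂, rfl⟩ := hn
  have hm₂ : 1 ≤ m₂ := by omega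
  have hn₂ : 1 ≤ n₂ := by omega
  have hmk : 2 * m₂ * k / 2 = m₂ * k := by
    rw [show 2 * m₂ * k = 2 * (m₂ * k) by ring, Nat.mul_div_cancel_left _ (by omega : 0 < 2)]
  have hnk : 2 * n₂ * k / 2 = n₂ * k := by
    rw [show 2 * n₂ * k = 2 * (n₂ * k) by ring, Nat.mul_div_cancel_left _ (by omega : 0 < 2)]
  rw [hmk, hnk]
  refine ⟨?_, ?_, ?_⟩
  · -- the main equivalence
    constructor
    · -- forward
      rintro ⟨ξ, hb, hr, hc, hB⟩
      refine ⟨padMat k ξ, ?_, ?_, ?_, ?_⟩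
      · intro p hp
        simp only [gridIcc, Finset.mem_product] at hp
        by_cases hcond : (p.1 - 1) % k ≤ 1 ∧ (p.2 - 1) % k ≤ 1
        · rw [padMat_pos hcond.1 hcond.2]
          apply hb
          simp only [gridIcc, Finset.mem_product]
          exact ⟨unpad_mem hk hp.1 hcond.1, unpad_mem hk hp.2 hcond.2⟩
        · rw [padMat_neg hcond]; omega
      · intro t ht
        by_cases hc1 : (t - 1) % k ≤ 1
        · rw [pad0_eq r hc1, ← hr (unpadIdx k t) (unpad_mem hk ht hc1),
            ← Finset.sum_filter_of_ne (p := fun s => (s - 1) % k ≤ 1)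
              (fun s _ hne => by
                by_contra hcon
                exact hne (padMat_neg fun hcc => hcon hcc.1)),
            sum_pad hk m₂ (fun s => padMat k ξ (s, t))]
          refine Finset.sum_congr rfl fun p hp => ?_
          simp only [Finset.mem_Icc] at hp
          show padMat k ξ (padIdx k p, t) = ξ (p, unpadIdx k t)
          rw [padMat_pos (show (padIdx k p - 1) % k ≤ 1 by rw [pad_mod hk]; omega) hc1,
            unpad_pad hk (show 1 ≤ p by omega)]
        · rw [pad0_zero r (by omega)]
          exact Finset.sum_eq_zero fun s _ => padMat_neg fun hcc => hc1 hcc.2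
      · intro s hs
        by_cases hc1 : (s - 1) % k ≤ 1
        · rw [pad0_eq c hc1, ← hc (unpadIdx k s) (unpad_mem hk hs hc1),
            ← Finset.sum_filter_of_ne (p := fun t => (t - 1) % k ≤ 1)
              (fun t _ hne => by
                by_contra hcon
                exact hne (padMat_neg fun hcc => hcon hcc.2)),
            sum_pad hk n₂ (fun t => padMat k ξ (s, t))]
          refine Finset.sum_congr rfl fun q hq => ?_
          simp only [Finset.mem_Icc] at hq
          show padMat k ξ (s, padIdx k q) = ξ (unpadIdx k s, q)
          rw [padMat_pos hc1 (show (padIdx k q - 1) % k ≤ 1 by rw [pad_mod hk]; omega),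
            unpad_pad hk (show 1 ≤ q by omega)]
        · rw [pad0_zero c (by omega)]
          exact Finset.sum_eq_zero fun t _ => padMat_neg fun hcc => hc1 hcc.1
      · intro w hw
        obtain ⟨u, vv, hu, hv, rfl⟩ := corner_mem hw
        have hB' := hB _ hw
        have key : ∀ a b : ℕ, a ≤ 1 → b ≤ 1 →
            padMat k ξ (k * u + 1 + a, k * vv + 1 + b) = ξ (2 * u + 1 + a, 2 * vv + 1 + b) := by
          intro a b ha hb'
          have h1 : (k * u + 1 + a - 1) % k = a := by
            rw [show k * u + 1 + a - 1 = k * u + a by omega]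
            exact mod_offset (by omega) u a (by omega)
          have h2 : (k * vv + 1 + b - 1) % k = b := by
            rw [show k * vv + 1 + b - 1 = k * vv + b by omega]
            exact mod_offset (by omega) vv b (by omega)
          rw [padMat_pos (show (k * u + 1 + a - 1) % k ≤ 1 by omega)
              (show (k * vv + 1 + b - 1) % k ≤ 1 by omega),
            unpad_at hk u a (by omega), unpad_at hk vv b (by omega),
            show 2 * u + a + 1 = 2 * u + 1 + a by omega,
            show 2 * vv + b + 1 = 2 * vv + 1 + b by omega]
        have hsum : ∑ z ∈ blockF k (k * u + 1) (k * vv + 1), padMat k ξ z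
            = ∑ z ∈ blockF 2 (2 * u + 1) (2 * vv + 1), ξ z := by
          rw [sum_blockF_eq hk u vv _
              (fun z _ h2 => padMat_neg fun hcc => by
                rcases h2 with h2 | h2
                · exact absurd hcc.1 (by omega)
                · exact absurd hcc.2 (by omega)),
            blockF_two, sum_block2,
            show k * u + 2 = k * u + 1 + 1 by omega, show k * vv + 2 = k * vv + 1 + 1 by omega]
          have k00 := key 0 0 (by omega) (by omega)
          have k01 := key 0 1 (by omega) (by omega)
          have k10 := key 1 0 (by omega) (by omega)
          have k11 := key 1 1 (by omega) (by omega)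
          simp only [Nat.add_zero] at k00 k01 k10 k11
          rw [k00, k01, k10, k11]
        show (rel (2 * u + 1, 2 * vv + 1)).holds
          (∑ z ∈ blockF k (cornerMap k (2 * u + 1, 2 * vv + 1)).1
            (cornerMap k (2 * u + 1, 2 * vv + 1)).2, padMat k ξ z) (v (2 * u + 1, 2 * vv + 1))
        rw [cornerMap_eval]
        show (rel (2 * u + 1, 2 * vv + 1)).holds
          (∑ z ∈ blockF k (k * u + 1) (k * vv + 1), padMat k ξ z) (v (2 * u + 1, 2 * vv + 1))
        rw [hsum]
        exact hB'
    · -- backward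
      rintro ⟨ξ', hb', hr', hc', hB'⟩
      have hz1 : ∀ s ∈ Finset.Icc 1 (m₂ * k), 2 ≤ (s - 1) % k →
          ∀ t ∈ Finset.Icc 1 (n₂ * k), ξ' (s, t) = 0 := by
        intro s hs h2 t ht
        have h0 : ∑ t' ∈ Finset.Icc 1 (n₂ * k), ξ' (s, t') = 0 := by
          rw [hc' s hs, pad0_zero c h2]
        exact Finset.sum_eq_zero_iff.mp h0 t ht
      have hz2 : ∀ t ∈ Finset.Icc 1 (n₂ * k), 2 ≤ (t - 1) % k →
          ∀ s ∈ Finset.Icc 1 (m₂ * k), ξ' (s, t) = 0 := by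
        intro t ht h2 s hs
        have h0 : ∑ s' ∈ Finset.Icc 1 (m₂ * k), ξ' (s', t) = 0 := by
          rw [hr' t ht, pad0_zero r h2]
        exact Finset.sum_eq_zero_iff.mp h0 s hs
      refine ⟨fun z => ξ' (padIdx k z.1, padIdx k z.2), ?_, ?_, ?_, ?_⟩
      · intro p hp
        simp only [gridIcc, Finset.mem_product] at hp
        exact hb' (padIdx k p.1, padIdx k p.2)
          (by simp only [gridIcc, Finset.mem_product]
              exact ⟨pad_mem hk hp.1, pad_mem hk hp.2⟩)
      · intro q hq
        have hq' : padIdx k q ∈ Finset.Icc 1 (n₂ * k) := pad_mem hk hq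
        have hval : pad0 k r (padIdx k q) = r q := by
          rw [pad0_eq r (by rw [pad_mod hk]; omega),
            unpad_pad hk (by simp only [Finset.mem_Icc] at hq; omega)]
        have h1 := hr' (padIdx k q) hq'
        rw [hval] at h1
        rw [← h1,
          ← Finset.sum_filter_of_ne (s := Finset.Icc 1 (m₂ * k))
            (f := fun s => ξ' (s, padIdx k q)) (p := fun s => (s - 1) % k ≤ 1)
            (fun s hs hne => by
              by_contra hcon
              exact hne (hz1 s hs (by omega) _ hq')),
          sum_pad hk m₂ (fun s => ξ' (s, padIdx k q))]
      · intro p hp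
        have hp' : padIdx k p ∈ Finset.Icc 1 (m₂ * k) := pad_mem hk hp
        have hval : pad0 k c (padIdx k p) = c p := by
          rw [pad0_eq c (by rw [pad_mod hk]; omega),
            unpad_pad hk (by simp only [Finset.mem_Icc] at hp; omega)]
        have h1 := hc' (padIdx k p) hp'
        rw [hval] at h1
        rw [← h1,
          ← Finset.sum_filter_of_ne (s := Finset.Icc 1 (n₂ * k))
            (f := fun t => ξ' (padIdx k p, t)) (p := fun t => (t - 1) % k ≤ 1)
            (fun t ht hne => by
              by_contra hcon
              exact hne (hz2 t ht (by omega) _ hp')),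
          sum_pad hk n₂ (fun t => ξ' (padIdx k p, t))]
      · intro w hw
        obtain ⟨u, vv, hu, hv, rfl⟩ := corner_mem hw
        have hB2 := hB' _ hw
        have e3 : m₂ * k = k * m₂ := by ring
        have e4 : n₂ * k = k * n₂ := by ring
        have e5 : k * (u + 1) = k * u + k := by ring
        have e6 : k * (vv + 1) = k * vv + k := by ring
        have e7 : k * (u + 1) ≤ k * m₂ := Nat.mul_le_mul_left k (by omega)
        have e8 : k * (vv + 1) ≤ k * n₂ := Nat.mul_le_mul_left k (by omega)
        have hsub : ∀ z ∈ blockF k (k * u + 1) (k * vv + 1),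
            z.1 ∈ Finset.Icc 1 (m₂ * k) ∧ z.2 ∈ Finset.Icc 1 (n₂ * k) := by
          intro z hz
          simp only [blockF, Finset.mem_product, Finset.mem_Icc] at hz
          simp only [Finset.mem_Icc]
          omega
        have hvan : ∀ z ∈ blockF k (k * u + 1) (k * vv + 1),
            (2 ≤ (z.1 - 1) % k ∨ 2 ≤ (z.2 - 1) % k) → ξ' z = 0 := by
          rintro z hz (h2 | h2)
          · exact hz1 z.1 (hsub z hz).1 h2 z.2 (hsub z hz).2
          · exact hz2 z.2 (hsub z hz).2 h2 z.1 (hsub z hz).1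
        have p0 : padIdx k (2 * u + 1) = k * u + 1 := by
          have := pad_at (k := k) u 0 (by omega); simpa using this
        have p1 : padIdx k (2 * u + 1 + 1) = k * u + 2 := by
          have := pad_at (k := k) u 1 (by omega)
          rw [show k * u + 1 + 1 = k * u + 2 by omega] at this; exact this
        have q0 : padIdx k (2 * vv + 1) = k * vv + 1 := by
          have := pad_at (k := k) vv 0 (by omega); simpa using this
        have q1 : padIdx k (2 * vv + 1 + 1) = k * vv + 2 := by
          have := pad_at (k := k) vv 1 (by omega)
          rw [show k * vv + 1 + 1 = k * vv + 2 by omega] at this; exact this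
        have hsum : ∑ z ∈ blockF 2 (2 * u + 1) (2 * vv + 1), ξ' (padIdx k z.1, padIdx k z.2)
            = ∑ z ∈ blockF k (k * u + 1) (k * vv + 1), ξ' z := by
          rw [blockF_two, sum_block2, sum_blockF_eq hk u vv ξ' hvan]
          simp only [p0, p1, q0, q1]
        have hB3 : (rel (2 * u + 1, 2 * vv + 1)).holds
            (∑ z ∈ blockF k (k * u + 1) (k * vv + 1), ξ' z) (v (2 * u + 1, 2 * vv + 1)) := by
          have e := cornerMap_eval k u vv
          rw [e] at hB2
          exact hB2
        show (rel (2 * u + 1, 2 * vv + 1)).holds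
          (∑ z ∈ blockF 2 (2 * u + 1) (2 * vv + 1), ξ' (padIdx k z.1, padIdx k z.2))
          (v (2 * u + 1, 2 * vv + 1))
        rw [hsum]
        exact hB3
  · -- image equality
    ext z
    simp only [Finset.mem_image]
    constructor
    · rintro ⟨w, hw, rfl⟩
      obtain ⟨u, vv, hu, hv, rfl⟩ := corner_mem hw
      rw [cornerMap_eval]
      simp only [cornerPts, gridIcc, Finset.mem_filter, Finset.mem_product, Finset.mem_Icc]
      have e5 : k * (u + 1) = k * u + k := by ring
      have e6 : k * (vv + 1) = k * vv + k := by ring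
      have e7 : k * (u + 1) ≤ k * m₂ := Nat.mul_le_mul_left k (by omega)
      have e8 : k * (vv + 1) ≤ k * n₂ := Nat.mul_le_mul_left k (by omega)
      have e3 : m₂ * k = k * m₂ := by ring
      have e4 : n₂ * k = k * n₂ := by ring
      have em1 : (k * u + 1) % k = 1 % k := by
        rw [show k * u + 1 = 1 + k * u by omega, Nat.add_mul_mod_self_left]
      have em2 : (k * vv + 1) % k = 1 % k := by
        rw [show k * vv + 1 = 1 + k * vv by omega, Nat.add_mul_mod_self_left]
      exact ⟨⟨⟨by omega, by omega⟩, by omega, by omega⟩, em1, em2⟩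
    · intro hz
      simp only [cornerPts, gridIcc, Finset.mem_filter, Finset.mem_product, Finset.mem_Icc] at hz
      obtain ⟨⟨⟨ha1, ha2⟩, hb1, hb2⟩, hmod1, hmod2⟩ := hz
      have h1k : (1 : ℕ) % k = 1 := Nat.mod_eq_of_lt (by omega)
      rw [h1k] at hmod1 hmod2
      have e1 : z.1 = k * (z.1 / k) + 1 := by
        have := Nat.div_add_mod z.1 k; omega
      have e2 : z.2 = k * (z.2 / k) + 1 := by
        have := Nat.div_add_mod z.2 k; omega
      have e3 : m₂ * k = k * m₂ := by ring
      have e4 : n₂ * k = k * n₂ := by ring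
      have hu : z.1 / k < m₂ := by
        by_contra hcon
        have : k * m₂ ≤ k * (z.1 / k) := Nat.mul_le_mul_left k (by omega)
        omega
      have hv : z.2 / k < n₂ := by
        by_contra hcon
        have : k * n₂ ≤ k * (z.2 / k) := Nat.mul_le_mul_left k (by omega)
        omega
      refine ⟨(2 * (z.1 / k) + 1, 2 * (z.2 / k) + 1), ?_, ?_⟩
      · simp only [cornerPts, gridIcc, Finset.mem_filter, Finset.mem_product, Finset.mem_Icc]
        refine ⟨⟨⟨by omega, by omega⟩, by omega, by omega⟩, by omega, by omega⟩
      · rw [cornerMap_eval]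
        exact Prod.ext e1.symm e2.symm
  · -- injectivity
    intro w1 h1 w2 h2 heq
    obtain ⟨u1, v1, _, _, rfl⟩ := corner_mem (Finset.mem_coe.mp h1)
    obtain ⟨u2, v2, _, _, rfl⟩ := corner_mem (Finset.mem_coe.mp h2)
    rw [cornerMap_eval, cornerMap_eval, Prod.mk.injEq] at heq
    have hu : u1 = u2 :=
      Nat.eq_of_mul_eq_mul_left (show 0 < k by omega) (show k * u1 = k * u2 by omega)
    have hv : v1 = v2 :=
      Nat.eq_of_mul_eq_mul_left (show 0 < k by omega) (show k * v1 = k * v2 by omega)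
    rw [Prod.mk.injEq]
    constructor <;> omega
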